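/- Let S be a coloring string of length at least 3 that is not rigid (i.e., some pair of consecutive characters of S is swappable). Then there exists a coloring string S′ such that the first three characters S′[1], S′[2], S′[3] are pairwise distinct and S and S′ are reconfigurable. -/

import Mathlib

/-- A coloring string: a string over the alphabet `{1,2,3}` (modeled as `Fin 3`)
in which consecutive characters are distinct; it encodes a proper 3-coloring of
a path. -/
def IsColoringString (S : List (Fin 3)) : Prop := S.Chain' (· ≠ ·)

/-- Two coloring strings are adjacent: one is obtained from the other by
exchanging a swappable pair of consecutive characters (i.e. the exchange yields
again a coloring string). -/
def StringStep (S S' : List (Fin 3)) : Prop :=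
  IsColoringString S ∧ IsColoringString S' ∧
    ∃ (A B : List (Fin 3)) (a b : Fin 3),
      S = A ++ a :: b :: B ∧ S' = A ++ b :: a :: B

/-- Two coloring strings are reconfigurable: they are joined by a sequence of
coloring strings in which consecutive strings are adjacent. -/
def StringReconf : List (Fin 3) → List (Fin 3) → Prop :=
  Relation.ReflTransGen StringStep

lemma col_append_cons : ∀ (C : List (Fin 3)) (x : Fin 3) (L M : List (Fin 3)),
    List.Chain' (· ≠ ·) (C ++ x :: L) → List.Chain' (· ≠ ·) (x :: M) →
    List.Chain' (· ≠ ·) (C ++ x :: M) := by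
  intro C
  induction C with
  | nil => intro x L M h h2; simpa using h2
  | cons c C ih =>
    intro x L M h h2
    simp only [List.Chain'] at h h2 ih ⊢
    rw [List.cons_append, List.isChain_cons] at h ⊢
    refine ⟨?_, ih x L M h.2 h2⟩
    intro y hy
    cases C with
    | nil =>
      simp at hy ⊢
      subst hy
      exact h.1 x (by simp)
    | cons d D =>
      simp at hy
      subst hy
      exact h.1 d (by simp)

lemma key : ∀ (n : ℕ) (S A B : List (Fin 3)) (a b : Fin 3), A.length = n →
    IsColoringString S → IsColoringString (A ++ b :: a :: B) →
    S = A ++ a :: b :: B → 3 ≤ S.length →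
    ∃ S' : List (Fin 3), StringReconf S S' ∧
      S'.getD 0 0 ≠ S'.getD 1 0 ∧ S'.getD 1 0 ≠ S'.getD 2 0 ∧
      S'.getD 0 0 ≠ S'.getD 2 0 := by
  intro n
  induction n with
  | zero =>
    intro S A B a b hlen hS hS' hSeq hlen3
    rw [List.length_eq_zero_iff] at hlen
    subst hlen
    simp only [List.nil_append] at hSeq hS'
    subst hSeq
    obtain ⟨c, B', rfl⟩ : ∃ c B', B = c :: B' := by
      cases B with
      | nil => simp at hlen3
      | cons c B' => exact ⟨c, B', rfl⟩
    refine ⟨a :: b :: c :: B', Relation.ReflTransGen.refl, ?_, ?_, ?_⟩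
    · exact (List.isChain_cons_cons.mp hS).1
    · exact (List.isChain_cons_cons.mp (List.isChain_cons_cons.mp hS).2).1
    · exact (List.isChain_cons_cons.mp (List.isChain_cons_cons.mp hS').2).1
  | succ n ih =>
    intro S A B a b hlen hS hS' hSeq hlen3
    match n, A, hlen with
    | 0, [x], _ =>
      simp only [List.cons_append, List.nil_append] at hSeq hS'
      subst hSeq
      refine ⟨x :: a :: b :: B, Relation.ReflTransGen.refl, ?_, ?_, ?_⟩
      · exact (List.isChain_cons_cons.mp hS).1
      · exact (List.isChain_cons_cons.mp (List.isChain_cons_cons.mp hS).2).1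
      · exact (List.isChain_cons_cons.mp hS').1
    | (m+1), A, hlen =>
      -- A.length = m + 2, so A = C ++ [p, q]
      obtain ⟨A₁, q, rfl⟩ : ∃ A₁ q, A = A₁ ++ [q] := by
        rcases A.eq_nil_or_concat with h | ⟨A₁, q, rfl⟩
        · subst h; simp at hlen
        · exact ⟨A₁, q, by simp⟩
      obtain ⟨C, p, rfl⟩ : ∃ C p, A₁ = C ++ [p] := by
        rcases A₁.eq_nil_or_concat with h | ⟨C, p, rfl⟩
        · subst h; simp at hlen
        · exact ⟨C, p, by simp⟩
      have hCl : C.length = m := by simpa using hlen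
      have hSeq' : S = C ++ p :: q :: a :: b :: B := by simp [hSeq]
      have hS'eq : (C ++ [p] ++ [q]) ++ b :: a :: B = C ++ p :: q :: b :: a :: B := by simp
      rw [hS'eq] at hS'
      -- facts
      have htail : List.Chain' (· ≠ ·) (p :: q :: a :: b :: B) :=
        hS.suffix (by rw [hSeq']; exact List.suffix_append _ _) |>.suffix (List.suffix_refl _)
      have htail' : List.Chain' (· ≠ ·) (p :: q :: b :: a :: B) :=
        (hS' : List.Chain' _ _).suffix (List.suffix_append _ _)
      have hpq : p ≠ q := (List.isChain_cons_cons.mp htail).1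
      have hqa : q ≠ a := (List.isChain_cons_cons.mp (List.isChain_cons_cons.mp htail).2).1
      have hab : a ≠ b :=
        (List.isChain_cons_cons.mp (List.isChain_cons_cons.mp (List.isChain_cons_cons.mp htail).2).2).1
      have hqb : q ≠ b := (List.isChain_cons_cons.mp (List.isChain_cons_cons.mp htail').2).1
      have hbB : List.Chain' (· ≠ ·) (b :: B) :=
        (List.isChain_cons_cons.mp (List.isChain_cons_cons.mp (List.isChain_cons_cons.mp htail).2).2).2
      have haB : List.Chain' (· ≠ ·) (a :: B) :=
        (List.isChain_cons_cons.mp (List.isChain_cons_cons.mp (List.isChain_cons_cons.mp htail').2).2).2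
      by_cases hpb : p = b
      · -- S itself has a swappable pair one position to the left
        have hU : IsColoringString (C ++ p :: a :: q :: b :: B) := by
          refine col_append_cons C p (q :: a :: b :: B) (a :: q :: b :: B)
            (by rw [← hSeq']; exact hS) ?_
          simp only [List.Chain'] at hbB haB ⊢
          rw [List.isChain_cons_cons, List.isChain_cons_cons, List.isChain_cons_cons]
          exact ⟨by rw [hpb]; exact fun h => hab h.symm, hqa.symm, hqb, hbB⟩
        refine ih S (C ++ [p]) (b :: B) q a (by simp [hCl]) hS (by simpa using hU)
          (by simp [hSeq']) hlen3
      · -- step to S' := swap, which has a swappable pair one position to the left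
        have hstep : StringStep S (C ++ p :: q :: b :: a :: B) :=
          ⟨hS, hS', C ++ [p, q], B, a, b, by simp [hSeq'], by simp⟩
        have hV : IsColoringString (C ++ p :: b :: q :: a :: B) := by
          refine col_append_cons C p (q :: b :: a :: B) (b :: q :: a :: B) hS' ?_
          simp only [List.Chain'] at hbB haB ⊢
          rw [List.isChain_cons_cons, List.isChain_cons_cons, List.isChain_cons_cons]
          exact ⟨hpb, hqb.symm, hqa, haB⟩
        obtain ⟨S', hrec, h1, h2, h3⟩ :=
          ih (C ++ p :: q :: b :: a :: B) (C ++ [p]) (a :: B) q b (by simp [hCl]) hS'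
            (by simpa using hV) (by simp) (by rw [hSeq'] at hlen3; simpa using hlen3)
        exact ⟨S', Relation.ReflTransGen.head hstep hrec, h1, h2, h3⟩

/-- a non-rigid coloring string of length at least 3 is
reconfigurable to a coloring string whose first three characters are pairwise
distinct. -/
theorem stmt_9 (S : List (Fin 3)) (hS : IsColoringString S) (hn : 3 ≤ S.length)
    (hnonrigid : ∃ S'', StringStep S S'') :
    ∃ S' : List (Fin 3), StringReconf S S' ∧
      S'.getD 0 0 ≠ S'.getD 1 0 ∧ S'.getD 1 0 ≠ S'.getD 2 0 ∧
      S'.getD 0 0 ≠ S'.getD 2 0 := by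
  obtain ⟨S'', h1, h2, A, B, a, b, hSeq, hS''eq⟩ := hnonrigid
  exact key A.length S A B a b rfl hS (hS''eq ▸ h2) hSeq hn
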